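/- arXiv:1401.2290 — 2 statements merged into one kernel-verified Lean document; each statement's English description precedes it below -/
import Mathlib

section
/- Let X be any k-dimensional simplicial complex on a finite vertex set V, let V = A_0 ⊔ … ⊔ A_k be a partition into nonempty parts, and let f ∈ C^{k−1}(X;ℝ) be the associated cochain (with the partition-adapted linear order on V). Then ⟨L^up_{k−1}(X)f, f⟩ = ⟨δ_{k−1}f, δ_{k−1}f⟩ = |V|²·|F(A_0,…,A_k)|. -/
open Finset

namespace HigherCheeger

variable {V : Type*} [DecidableEq V] [Fintype V] [LinearOrder V]

/-- An abstract simplicial complex: a family of finite subsets of `V`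
closed under taking subsets. -/
def IsComplex (X : Finset (Finset V)) : Prop :=
  ∀ σ ∈ X, ∀ τ ⊆ σ, τ ∈ X

/-- `X` is `k`-dimensional: every face has at most `k+1` vertices
and some face has exactly `k+1` vertices. -/
def IsDim (X : Finset (Finset V)) (k : ℕ) : Prop :=
  (∀ σ ∈ X, σ.card ≤ k + 1) ∧ ∃ σ ∈ X, σ.card = k + 1

/-- The faces of `X` of cardinality `c` (i.e. of dimension `c - 1`). -/
def faces (X : Finset (Finset V)) (c : ℕ) : Finset (Finset V) :=
  X.filter fun σ => σ.card = c

/-- `X` has complete `(k-1)`-skeleton: every subset of `V` of size at most `k` is a face. -/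
def CompleteSkeleton (X : Finset (Finset V)) (k : ℕ) : Prop :=
  ∀ σ : Finset V, σ.card ≤ k → σ ∈ X

/-- The `k`-dimensional completion `K(X)`. -/
def completion (X : Finset (Finset V)) (k : ℕ) : Finset (Finset V) :=
  X ∪ (Finset.univ.filter fun τ : Finset V => τ.card = k + 1 ∧ ∀ v ∈ τ, τ.erase v ∈ X)

/-- The complete `k`-dimensional complex `K_n^k` on the vertex set `V`. -/
def completeComplex (V : Type*) [DecidableEq V] [Fintype V] (k : ℕ) : Finset (Finset V) :=
  Finset.univ.filter fun σ : Finset V => σ.card ≤ k + 1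

/-- The oriented incidence number `[τ:σ]` (with respect to the linear order on `V`):
`(-1)^j` if `σ = τ \ {v_j}` where `v_j` is the `j`-th smallest vertex of `τ`, and `0` otherwise. -/
def incidence (τ σ : Finset V) : ℝ :=
  if σ ⊆ τ ∧ σ.card + 1 = τ.card then
    ∑ v ∈ τ \ σ, (-1 : ℝ) ^ (τ.filter fun w => w < v).card
  else 0

/-- The real coboundary operator `δ` applied to a cochain living on the faces of
cardinality `c`; the result lives on faces of cardinality `c + 1`. -/
def delta (X : Finset (Finset V)) (c : ℕ) (f : Finset V → ℝ) : Finset V → ℝ :=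
  fun τ => ∑ σ ∈ faces X c, incidence τ σ * f σ

/-- The real boundary operator `∂` (the adjoint of `δ`) applied to a cochain living
on the faces of cardinality `c`; the result lives on faces of cardinality `c - 1`. -/
def bdry (X : Finset (Finset V)) (c : ℕ) (f : Finset V → ℝ) : Finset V → ℝ :=
  fun σ => ∑ τ ∈ faces X c, incidence τ σ * f τ

/-- The inner product of two cochains on the faces of cardinality `c`. -/
def inn (X : Finset (Finset V)) (c : ℕ) (f g : Finset V → ℝ) : ℝ :=
  ∑ σ ∈ faces X c, f σ * g σ

/-- The upper Laplacian `L^up_{k-1} = ∂_k δ_{k-1}` acting on `(k-1)`-cochains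
(functions on faces of cardinality `k`). -/
def lapUp (X : Finset (Finset V)) (k : ℕ) (f : Finset V → ℝ) : Finset V → ℝ :=
  bdry X (k + 1) (delta X k f)

/-- The lower Laplacian `L^down_{k-1} = δ_{k-2} ∂_{k-1}` acting on `(k-1)`-cochains. -/
def lapDown (X : Finset (Finset V)) (k : ℕ) (f : Finset V → ℝ) : Finset V → ℝ :=
  delta X (k - 1) (bdry X k f)

/-- `f ∈ Z_{k-1}(X;ℝ) = ker ∂_{k-1}`. -/
def IsCycle (X : Finset (Finset V)) (k : ℕ) (f : Finset V → ℝ) : Prop :=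
  ∀ σ : Finset V, bdry X k f σ = 0

/-- `f ∈ B^{k-1}(X;ℝ) = im δ_{k-2}` (as a cochain, i.e. on the `(k-1)`-faces). -/
def IsCobdry (X : Finset (Finset V)) (k : ℕ) (f : Finset V → ℝ) : Prop :=
  ∃ g : Finset V → ℝ, ∀ σ ∈ faces X k, f σ = delta X (k - 1) g σ

/-- The spectral gap `λ(X)`: the minimum of the Rayleigh quotient
`⟨L^up_{k-1}(X) f, f⟩ / ⟨f, f⟩` over nonzero `f ∈ Z_{k-1}(X;ℝ)`. -/
noncomputable def spectralGap (X : Finset (Finset V)) (k : ℕ) : ℝ :=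
  sInf {r : ℝ | ∃ f : Finset V → ℝ, IsCycle X k f ∧ inn X k f f ≠ 0 ∧
    r = inn X k (lapUp X k f) f / inn X k f f}

/-- A partition of `V` into `m` (nonempty) parts. -/
def IsPartition {m : ℕ} (A : Fin m → Finset V) : Prop :=
  (∀ i, (A i).Nonempty) ∧ ∀ v : V, ∃! i, v ∈ A i

/-- The linear order on `V` is adapted to the family of parts `A`. -/
def OrderAdapted {m : ℕ} (A : Fin m → Finset V) : Prop :=
  ∀ i j : Fin m, i < j → ∀ v ∈ A i, ∀ w ∈ A j, v < w

/-- `F(A_0,…,A_k)`: the `k`-faces of `X` with exactly one vertex in each part. -/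
def Fset (X : Finset (Finset V)) (k : ℕ) (A : Fin (k + 1) → Finset V) : Finset (Finset V) :=
  (faces X (k + 1)).filter fun τ => ∀ i, (τ ∩ A i).card = 1

/-- `F^∂(A_0,…,A_k)`: the `(k+1)`-element members of `K(X)` with exactly one vertex
in each part. -/
def Fpar (X : Finset (Finset V)) (k : ℕ) (A : Fin (k + 1) → Finset V) : Finset (Finset V) :=
  (faces (completion X k) (k + 1)).filter fun τ => ∀ i, (τ ∩ A i).card = 1

/-- The value `|V|·|F(A_0,…,A_k)| / |F^∂(A_0,…,A_k)|` of a partition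
(`⊤` if the denominator is `0`). -/
noncomputable def cheegerVal (X : Finset (Finset V)) (k : ℕ) (A : Fin (k + 1) → Finset V) :
    EReal :=
  if (Fpar X k A).card = 0 then ⊤
  else (((Fintype.card V * (Fset X k A).card : ℝ) / ((Fpar X k A).card : ℝ) : ℝ) : EReal)

/-- The Cheeger constant `h(X)`. -/
noncomputable def cheeger (X : Finset (Finset V)) (k : ℕ) : EReal :=
  sInf {r : EReal | ∃ A : Fin (k + 1) → Finset V, IsPartition A ∧ r = cheegerVal X k A}

/-- `d(σ)`: the number of members of `F^∂(A_0,…,A_k)` containing `σ`. -/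
def degPar (X : Finset (Finset V)) (k : ℕ) (A : Fin (k + 1) → Finset V) (σ : Finset V) : ℕ :=
  ((Fpar X k A).filter fun τ => σ ⊆ τ).card

/-- `C(X)` (with respect to the partition `A`):
the maximum over `τ ∈ F^∂(A_0,…,A_k)` of `∑_{v ∈ τ} d(τ \ {v})`. -/
def Cconst (X : Finset (Finset V)) (k : ℕ) (A : Fin (k + 1) → Finset V) : ℕ :=
  (Fpar X k A).sup fun τ => ∑ v ∈ τ, degPar X k A (τ.erase v)

/-- The cochain associated to a partition `A`: `σ ↦ (-1)^l·|A_l|` if `A_l` is the unique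
part disjoint from `σ`, and `0` otherwise. -/
def assocCochain {k : ℕ} (A : Fin (k + 1) → Finset V) (σ : Finset V) : ℝ :=
  if (Finset.univ.filter fun l => σ ∩ A l = ∅).card = 1 then
    ∑ l ∈ Finset.univ.filter fun l => σ ∩ A l = ∅, (-1 : ℝ) ^ (l : ℕ) * ((A l).card : ℝ)
  else 0

/-- The `Z₂`-coboundary: a `(c-1)`-cochain `f` is sent to
`τ ↦ ∑_{v ∈ τ} f (τ \ {v})`. -/
def deltaZ2 (f : Finset V → ZMod 2) (τ : Finset V) : ZMod 2 :=
  ∑ v ∈ τ, f (τ.erase v)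

/-- The support of the `Z₂`-coboundary of `f` in `X`: the faces of `X` of cardinality
`k + 1` on which the `Z₂`-coboundary of `f` is nonzero.  Its cardinality is `|δ_X f|`. -/
def suppDelta (X : Finset (Finset V)) (k : ℕ) (f : Finset V → ZMod 2) : Finset (Finset V) :=
  (faces X (k + 1)).filter fun τ => deltaZ2 f τ ≠ 0

/-- `F(A_0,…,A_{k-1})`: the `(k-1)`-faces of `X` with exactly one vertex in each of
the `k` parts. -/
def FsetLow (X : Finset (Finset V)) (k : ℕ) (A : Fin k → Finset V) : Finset (Finset V) :=
  (faces X k).filter fun σ => ∀ i, (σ ∩ A i).card = 1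

/-- The Cheeger-type constant `h'(X)`. -/
noncomputable def cheeger' (X : Finset (Finset V)) (k : ℕ) : EReal :=
  sInf {r : EReal | ∃ (A : Fin k → Finset V) (f : Finset V → ZMod 2),
    IsPartition A ∧ (∀ σ, f σ ≠ 0 → σ ∈ FsetLow X k A) ∧
    r = if (suppDelta (completion X k) k f).card = 0 then (⊤ : EReal)
        else (((Fintype.card V * (suppDelta X k f).card : ℝ) /
              ((suppDelta (completion X k) k f).card : ℝ) : ℝ) : EReal)}

/-- The Hamming norm of a `Z₂`-cochain on the faces of cardinality `c`. -/
def hamming (X : Finset (Finset V)) (c : ℕ) (f : Finset V → ZMod 2) : ℕ :=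
  ((faces X c).filter fun σ => f σ ≠ 0).card

/-- `|[f]|`: the minimum Hamming norm of `f + δ_X g` over `g ∈ C^{k-2}(X;Z₂)`. -/
noncomputable def normClass (X : Finset (Finset V)) (k : ℕ) (f : Finset V → ZMod 2) : ℕ :=
  sInf {m : ℕ | ∃ g : Finset V → ZMod 2, m = hamming X k fun σ => f σ + deltaZ2 g σ}

/-- The coboundary expansion `φ(X) = min_f |δ_X f| / |[f]|` (quotients with denominator
`0` are `∞`). -/
noncomputable def phi (X : Finset (Finset V)) (k : ℕ) : EReal :=
  sInf {r : EReal | ∃ f : Finset V → ZMod 2,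
    r = if normClass X k f = 0 then (⊤ : EReal)
        else ((((suppDelta X k f).card : ℝ) / (normClass X k f : ℝ) : ℝ) : EReal)}

/-- `h̃(X) = min_f |V|·|δ_X f| / |δ_{K(X)} f|` (quotients with denominator `0` are `∞`). -/
noncomputable def htilde (X : Finset (Finset V)) (k : ℕ) : EReal :=
  sInf {r : EReal | ∃ f : Finset V → ZMod 2,
    r = if (suppDelta (completion X k) k f).card = 0 then (⊤ : EReal)
        else (((Fintype.card V * (suppDelta X k f).card : ℝ) /
              ((suppDelta (completion X k) k f).card : ℝ) : ℝ) : EReal)}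


set_option linter.unusedSectionVars false

section AuxProof
variable {k : ℕ} {A : Fin (k + 1) → Finset V}

noncomputable def part (hA : IsPartition A) (v : V) : Fin (k + 1) :=
  (hA.2 v).choose
lemma mem_part (hA : IsPartition A) (v : V) : v ∈ A (part hA v) :=
  (hA.2 v).choose_spec.1
lemma part_eq (hA : IsPartition A) {v : V} {i : Fin (k + 1)} (h : v ∈ A i) :
    part hA v = i :=
  ((hA.2 v).choose_spec.2 i h).symm
lemma mem_iff_part (hA : IsPartition A) {v : V} {i : Fin (k + 1)} :
    v ∈ A i ↔ part hA v = i :=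
  ⟨part_eq hA, fun h => h ▸ mem_part hA v⟩
lemma missed_eq (hA : IsPartition A) (σ : Finset V) :
    (univ.filter fun l => σ ∩ A l = ∅) = (σ.image (part hA))ᶜ := by
  ext l
  simp [eq_empty_iff_forall_notMem, mem_iff_part hA]


lemma part_between (hA : IsPartition A) (hord : OrderAdapted A) {u x w : V}
    (h1 : u < x) (h2 : x < w) (hp : part hA u = part hA w) :
    part hA x = part hA u := by
  rcases lt_trichotomy (part hA x) (part hA u) with h | h | h
  · exact absurd (hord _ _ h _ (mem_part hA x) _ (mem_part hA u)) (asymm h1)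
  · exact h
  · rw [hp] at h
    exact absurd (hord _ _ h _ (mem_part hA w) _ (mem_part hA x)) (asymm h2)

lemma assoc_apply (hA : IsPartition A) (σ : Finset V) :
    assocCochain A σ = if ((σ.image (part hA))ᶜ).card = 1 then
      ∑ l ∈ (σ.image (part hA))ᶜ, (-1 : ℝ) ^ (l : ℕ) * ((A l).card : ℝ) else 0 := by
  rw [assocCochain, missed_eq hA]

lemma delta_eq_sum {X : Finset (Finset V)} (hX : IsComplex X) {τ : Finset V}
    (hτX : τ ∈ X) (hcard : τ.card = k + 1) (f : Finset V → ℝ) :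
    delta X k f τ
      = ∑ v ∈ τ, (-1 : ℝ) ^ (τ.filter fun w => w < v).card * f (τ.erase v) := by
  rw [delta, ← Finset.sum_filter_of_ne (p := fun σ => σ ⊆ τ)
    (fun σ _ hne => by
      by_contra hsub
      exact hne (by rw [incidence, if_neg (fun hcon => hsub hcon.1), zero_mul]))]
  have hfill : (faces X k).filter (fun σ => σ ⊆ τ) = τ.image τ.erase := by
    ext σ
    simp only [faces, mem_filter, mem_image]
    constructor
    · rintro ⟨⟨hσX, hσc⟩, hsub⟩
      have hd : (τ \ σ).card = 1 := by
        rw [Finset.card_sdiff_of_subset hsub, hσc, hcard]; omega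
      obtain ⟨v, hv⟩ := Finset.card_eq_one.mp hd
      have hvτ : v ∈ τ := by
        have h := hv ▸ Finset.mem_singleton_self v
        exact (Finset.mem_sdiff.mp h).1
      refine ⟨v, hvτ, ?_⟩
      rw [Finset.erase_eq, ← hv, Finset.sdiff_sdiff_self_left,
        Finset.inter_eq_right.mpr hsub]
    · rintro ⟨v, hv, rfl⟩
      refine ⟨⟨hX τ hτX _ (Finset.erase_subset _ _), ?_⟩, Finset.erase_subset _ _⟩
      rw [Finset.card_erase_of_mem hv, hcard]; omega
  rw [hfill, Finset.sum_image (fun x hx y hy h => Finset.erase_injOn τ hx hy h)]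
  refine Finset.sum_congr rfl fun v hv => ?_
  rw [incidence, if_pos ⟨Finset.erase_subset _ _, Finset.card_erase_add_one hv⟩]
  have h1 : τ \ τ.erase v = {v} := by
    rw [Finset.erase_eq, Finset.sdiff_sdiff_self_left,
      Finset.inter_singleton_of_mem hv]
  rw [h1, Finset.sum_singleton]


lemma collision_zero (hA : IsPartition A) {τ : Finset V} (hcard : τ.card = k + 1)
    {v : V} (hv : v ∈ τ) (hni : ¬ Set.InjOn (part hA) (τ.erase v)) :
    assocCochain A (τ.erase v) = 0 := by
  rw [assoc_apply hA, if_neg]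
  intro h1
  have hcc := Finset.card_compl ((τ.erase v).image (part hA))
  rw [h1, Fintype.card_fin] at hcc
  have hle := Finset.card_image_le (s := τ.erase v) (f := part hA)
  rw [Finset.card_erase_of_mem hv, hcard] at hle
  apply hni
  apply Finset.card_image_iff.mp
  rw [Finset.card_erase_of_mem hv, hcard]
  omega

lemma sum_zero_of_collision (hA : IsPartition A) (hord : OrderAdapted A)
    {τ : Finset V} (hcard : τ.card = k + 1) {u w : V} (hu : u ∈ τ) (hw : w ∈ τ)
    (hlt : u < w) (hpuw : part hA u = part hA w) :
    ∑ v ∈ τ, (-1 : ℝ) ^ (τ.filter fun x => x < v).card * assocCochain A (τ.erase v)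
      = 0 := by
  have hne : u ≠ w := ne_of_lt hlt
  by_cases hk : (τ.image (part hA)).card = k
  · -- images of erase u, erase w both equal image of τ
    have himgU : (τ.erase u).image (part hA) = τ.image (part hA) := by
      refine Finset.Subset.antisymm
        (Finset.image_subset_image (Finset.erase_subset _ _)) ?_
      intro i hi
      obtain ⟨x, hx, rfl⟩ := mem_image.mp hi
      by_cases hxu : x = u
      · subst hxu
        rw [hpuw]
        exact mem_image_of_mem _ (mem_erase.mpr ⟨hne.symm, hw⟩)
      · exact mem_image_of_mem _ (mem_erase.mpr ⟨hxu, hx⟩)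
    have himgW : (τ.erase w).image (part hA) = τ.image (part hA) := by
      refine Finset.Subset.antisymm
        (Finset.image_subset_image (Finset.erase_subset _ _)) ?_
      intro i hi
      obtain ⟨x, hx, rfl⟩ := mem_image.mp hi
      by_cases hxw : x = w
      · subst hxw
        rw [← hpuw]
        exact mem_image_of_mem _ (mem_erase.mpr ⟨hne, hu⟩)
      · exact mem_image_of_mem _ (mem_erase.mpr ⟨hxw, hx⟩)
    have hinjU : Set.InjOn (part hA) (τ.erase u) := by
      apply Finset.card_image_iff.mp
      rw [himgU, hk, Finset.card_erase_of_mem hu, hcard]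
      omega
    have hfeq : assocCochain A (τ.erase u) = assocCochain A (τ.erase w) := by
      rw [assoc_apply hA, assoc_apply hA, himgU, himgW]
    have hfilt : τ.filter (fun x => x < w) = insert u (τ.filter fun x => x < u) := by
      ext x
      simp only [mem_filter, mem_insert]
      constructor
      · rintro ⟨hx, hxw⟩
        rcases lt_trichotomy x u with h | h | h
        · exact Or.inr ⟨hx, h⟩
        · exact Or.inl h
        · exfalso
          have hp : part hA x = part hA u := part_between hA hord h hxw hpuw
          have hxE : x ∈ τ.erase u := mem_erase.mpr ⟨ne_of_gt h, hx⟩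
          have hwE : w ∈ τ.erase u := mem_erase.mpr ⟨hne.symm, hw⟩
          exact absurd (hinjU hxE hwE (hp.trans hpuw)) (ne_of_lt hxw)
      · rintro (rfl | ⟨hx, hxu⟩)
        · exact ⟨hu, hlt⟩
        · exact ⟨hx, hxu.trans hlt⟩
    have hcardf : (τ.filter fun x => x < w).card
        = (τ.filter fun x => x < u).card + 1 := by
      rw [hfilt, Finset.card_insert_of_notMem (by simp)]
    have hsub : ({u, w} : Finset V) ⊆ τ :=
      Finset.insert_subset hu (Finset.singleton_subset_iff.mpr hw)
    rw [← Finset.sum_subset hsub (fun v hv hvn => ?_)]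
    · rw [Finset.sum_pair hne, hcardf, hfeq, pow_succ]
      ring
    · simp only [mem_insert, mem_singleton, not_or] at hvn
      have hni : ¬ Set.InjOn (part hA) (τ.erase v) := fun hi =>
        hne (hi (Finset.mem_coe.mpr (mem_erase.mpr ⟨fun h => hvn.1 h.symm, hu⟩))
          (Finset.mem_coe.mpr (mem_erase.mpr ⟨fun h => hvn.2 h.symm, hw⟩)) hpuw)
      rw [collision_zero hA hcard hv hni, mul_zero]
  · -- image card < k : every erase has a collision
    have hlek : (τ.image (part hA)).card ≤ k := by
      have h1 := Finset.card_image_le (s := τ) (f := part hA)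
      have h2 : (τ.image (part hA)).card ≠ τ.card := fun h =>
        hne (Finset.card_image_iff.mp h (Finset.mem_coe.mpr hu)
          (Finset.mem_coe.mpr hw) hpuw)
      omega
    have hlt2 : (τ.image (part hA)).card < k := lt_of_le_of_ne hlek hk
    apply Finset.sum_eq_zero
    intro v hv
    have hni : ¬ Set.InjOn (part hA) (τ.erase v) := by
      intro hi
      have h3 := Finset.card_image_of_injOn hi
      have h4 : ((τ.erase v).image (part hA)).card ≤ (τ.image (part hA)).card :=
        Finset.card_le_card (Finset.image_subset_image (Finset.erase_subset _ _))
      rw [Finset.card_erase_of_mem hv, hcard] at h3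
      omega
    rw [collision_zero hA hcard hv hni, mul_zero]

lemma sum_card_parts (hA : IsPartition A) :
    ∑ i, (A i).card = Fintype.card V := by
  have h := Finset.card_eq_sum_card_fiberwise
    (f := part hA) (s := (univ : Finset V)) (t := univ) (fun x _ => mem_univ _)
  rw [← Finset.card_univ, h]
  refine Finset.sum_congr rfl fun i _ => ?_
  congr 1
  ext v
  simp [mem_iff_part hA]

lemma injOn_iff_rainbow (hA : IsPartition A) {τ : Finset V} (hcard : τ.card = k + 1) :
    Set.InjOn (part hA) τ ↔ ∀ i, (τ ∩ A i).card = 1 := by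
  constructor
  · intro hinj i
    have himg : τ.image (part hA) = univ := by
      apply Finset.eq_univ_of_card
      rw [Finset.card_image_of_injOn hinj, hcard, Fintype.card_fin]
    have hi : i ∈ τ.image (part hA) := himg ▸ mem_univ i
    obtain ⟨v, hv, hpv⟩ := mem_image.mp hi
    rw [Finset.card_eq_one]
    refine ⟨v, ?_⟩
    ext x
    simp only [mem_inter, mem_singleton, mem_iff_part hA]
    constructor
    · rintro ⟨hx, hpx⟩
      exact hinj hx hv (hpx.trans hpv.symm)
    · rintro rfl
      exact ⟨hv, hpv⟩
  · intro h x hx y hy hxy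
    have h1 : x ∈ τ ∩ A (part hA x) := mem_inter.mpr ⟨hx, mem_part hA x⟩
    have h2 : y ∈ τ ∩ A (part hA x) := mem_inter.mpr ⟨hy, (mem_iff_part hA).mpr hxy.symm⟩
    exact Finset.card_le_one.mp (le_of_eq (h (part hA x))) x h1 y h2

lemma filter_lt_card (hA : IsPartition A) (hord : OrderAdapted A) {τ : Finset V}
    (hinj : Set.InjOn (part hA) τ) (himg : τ.image (part hA) = univ)
    {v : V} (hv : v ∈ τ) :
    (τ.filter fun w => w < v).card = (part hA v : ℕ) := by
  have hset : τ.filter (fun w => w < v) = τ.filter fun w => part hA w < part hA v := by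
    ext x
    simp only [mem_filter, and_congr_right_iff]
    intro hx
    constructor
    · intro hlt
      rcases lt_trichotomy (part hA x) (part hA v) with h | h | h
      · exact h
      · exact absurd (hinj hx hv h) (ne_of_lt hlt)
      · exact absurd (hord _ _ h _ (mem_part hA v) _ (mem_part hA x)) (asymm hlt)
    · intro h
      exact hord _ _ h _ (mem_part hA x) _ (mem_part hA v)
  rw [hset]
  have himg2 : (τ.filter fun w => part hA w < part hA v).image (part hA)
      = univ.filter fun i => i < part hA v := by
    ext i
    simp only [mem_image, mem_filter, mem_univ, true_and]
    constructor
    · rintro ⟨x, ⟨hx, hlt⟩, rfl⟩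
      exact hlt
    · intro hi
      have hmem : i ∈ τ.image (part hA) := himg ▸ mem_univ i
      obtain ⟨x, hx, rfl⟩ := mem_image.mp hmem
      exact ⟨x, ⟨hx, hi⟩, rfl⟩
  have hc := Finset.card_image_of_injOn (s := τ.filter fun w => part hA w < part hA v)
    (hinj.mono (fun x hx => (mem_filter.mp hx).1))
  rw [← hc, himg2]
  have : (univ.filter fun i : Fin (k+1) => i < part hA v) = Finset.Iio (part hA v) := by
    ext i; simp
  rw [this, Fin.card_Iio]


lemma delta_assoc (X : Finset (Finset V)) (hX : IsComplex X)
    (hA : IsPartition A) (hord : OrderAdapted A) {τ : Finset V}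
    (hτX : τ ∈ X) (hcard : τ.card = k + 1) :
    delta X k (assocCochain A) τ
      = if ∀ i, (τ ∩ A i).card = 1 then (Fintype.card V : ℝ) else 0 := by
  rw [delta_eq_sum hX hτX hcard]
  by_cases hinj : Set.InjOn (part hA) τ
  · rw [if_pos ((injOn_iff_rainbow hA hcard).mp hinj)]
    have himg : τ.image (part hA) = univ := by
      apply Finset.eq_univ_of_card
      rw [Finset.card_image_of_injOn hinj, hcard, Fintype.card_fin]
    have hterm : ∀ v ∈ τ,
        (-1 : ℝ) ^ (τ.filter fun w => w < v).card * assocCochain A (τ.erase v)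
          = ((A (part hA v)).card : ℝ) := by
      intro v hv
      have himgE : ((τ.erase v).image (part hA))ᶜ = {part hA v} := by
        ext i
        simp only [mem_compl, mem_image, mem_singleton, not_exists, not_and]
        constructor
        · intro h
          by_contra hni
          have hiu : i ∈ τ.image (part hA) := himg ▸ mem_univ i
          obtain ⟨x, hx, rfl⟩ := mem_image.mp hiu
          have hxv : x ≠ v := fun he => hni (he ▸ rfl)
          exact h x (Finset.mem_erase.mpr ⟨hxv, hx⟩) rfl
        · rintro rfl x hx hpx
          exact (Finset.mem_erase.mp hx).1
            (hinj (Finset.mem_coe.mpr (Finset.mem_erase.mp hx).2)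
              (Finset.mem_coe.mpr hv) hpx)
      rw [assoc_apply hA, himgE, if_pos (Finset.card_singleton _),
        Finset.sum_singleton, filter_lt_card hA hord hinj himg hv,
        ← mul_assoc, ← pow_add]
      have hev : Even ((part hA v : ℕ) + (part hA v : ℕ)) := ⟨_, rfl⟩
      rw [hev.neg_one_pow, one_mul]
    rw [Finset.sum_congr rfl hterm,
      ← Finset.sum_image (g := part hA) (f := fun i => ((A i).card : ℝ))
        (fun x hx y hy h => hinj (Finset.mem_coe.mpr hx) (Finset.mem_coe.mpr hy) h),
      himg, ← Nat.cast_sum, sum_card_parts hA]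
  · rw [if_neg (fun h => hinj ((injOn_iff_rainbow hA hcard).mpr h))]
    rw [Set.InjOn] at hinj
    push_neg at hinj
    obtain ⟨u, hu, w, hw, hpuw, hne⟩ := hinj
    rcases hne.lt_or_gt with hlt | hlt
    · exact sum_zero_of_collision hA hord hcard hu hw hlt hpuw
    · exact sum_zero_of_collision hA hord hcard hw hu hlt hpuw.symm
end AuxProof

/-- **Lemma 1.6 (Parzanchevski et al.).**  Let `X` be any `k`-dimensional complex, `A` a
partition of `V` into `k+1` nonempty parts and `f` the associated cochain (w.r.t. a
partition-adapted order).  Then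
`⟨L^up_{k-1}(X) f, f⟩ = ⟨δ_{k-1} f, δ_{k-1} f⟩ = |V|²·|F(A_0,…,A_k)|`. -/
theorem lapUp_assocCochain_inner
    {V : Type*} [DecidableEq V] [Fintype V] [LinearOrder V]
    (X : Finset (Finset V)) (k : ℕ)
    (hX : IsComplex X) (hdim : IsDim X k)
    (A : Fin (k + 1) → Finset V) (hA : IsPartition A) (hord : OrderAdapted A) :
    inn X k (lapUp X k (assocCochain A)) (assocCochain A)
      = inn X (k + 1) (delta X k (assocCochain A)) (delta X k (assocCochain A)) ∧
    inn X (k + 1) (delta X k (assocCochain A)) (delta X k (assocCochain A))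
      = (Fintype.card V : ℝ) ^ 2 * ((Fset X k A).card : ℝ) := by
  constructor
  · unfold inn lapUp bdry
    simp only [Finset.sum_mul]
    rw [Finset.sum_comm]
    refine Finset.sum_congr rfl fun τ hτ => ?_
    rw [show delta X k (assocCochain A) τ * delta X k (assocCochain A) τ
        = delta X k (assocCochain A) τ
          * ∑ σ ∈ faces X k, incidence τ σ * assocCochain A σ from rfl,
      Finset.mul_sum]
    exact Finset.sum_congr rfl fun σ _ => by ring
  · unfold inn
    have hterm : ∀ τ ∈ faces X (k + 1),
        delta X k (assocCochain A) τ * delta X k (assocCochain A) τ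
          = if (∀ i, (τ ∩ A i).card = 1) then ((Fintype.card V : ℝ)) ^ 2 else 0 := by
      intro τ hτ
      obtain ⟨hτX, hτc⟩ := Finset.mem_filter.mp hτ
      rw [delta_assoc X hX hA hord hτX hτc]
      split_ifs
      · rw [sq]
      · rw [mul_zero]
    rw [Finset.sum_congr rfl hterm, ← Finset.sum_filter, Finset.sum_const,
      nsmul_eq_mul, mul_comm]
    rfl


end HigherCheeger
end

section
/- Let X be any k-dimensional simplicial complex on a finite vertex set V, let V = A_0 ⊔ … ⊔ A_k be a partition into nonempty parts, and let f ∈ C^{k−1}(X;ℝ) be the associated cochain (with the partition-adapted linear order on V). Then for every k-face τ ∈ X_k: (δ_{k−1}f)(τ) = |V| if τ ∈ F(A_0,…,A_k), and (δ_{k−1}f)(τ) = 0 otherwise. -/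
open Finset

namespace HigherCheeger

variable {V : Type*} [DecidableEq V] [Fintype V] [LinearOrder V]

noncomputable def pIdx {m : ℕ} (A : Fin m → Finset V) (hA : IsPartition A) (v : V) : Fin m :=
  (hA.2 v).choose

omit [DecidableEq V] [Fintype V] [LinearOrder V] in
lemma mem_pIdx {m : ℕ} (A : Fin m → Finset V) (hA : IsPartition A) (v : V) :
    v ∈ A (pIdx A hA v) := (hA.2 v).choose_spec.1

omit [DecidableEq V] [Fintype V] [LinearOrder V] in
lemma pIdx_eq {m : ℕ} (A : Fin m → Finset V) (hA : IsPartition A) {v : V} {i : Fin m}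
    (h : v ∈ A i) : pIdx A hA v = i := ((hA.2 v).choose_spec.2 i h).symm

omit [Fintype V] [LinearOrder V] in
lemma filter_pIdx {m : ℕ} (A : Fin m → Finset V) (hA : IsPartition A) (s : Finset V) (l : Fin m) :
    s.filter (fun v => pIdx A hA v = l) = s ∩ A l := by
  ext v
  simp only [mem_filter, mem_inter]
  constructor
  · rintro ⟨hv, rfl⟩; exact ⟨hv, mem_pIdx A hA v⟩
  · rintro ⟨hv, hv'⟩; exact ⟨hv, pIdx_eq A hA hv'⟩

omit [Fintype V] [LinearOrder V] in
lemma sum_card_inter {m : ℕ} (A : Fin m → Finset V) (hA : IsPartition A) (s : Finset V) :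
    ∑ l, (s ∩ A l).card = s.card := by
  rw [Finset.card_eq_sum_card_fiberwise (f := pIdx A hA) (t := Finset.univ)
    (fun v _ => mem_univ _)]
  exact Finset.sum_congr rfl fun l _ => by rw [filter_pIdx]

lemma filter_lt_univ_fin {m : ℕ} (i : Fin m) :
    (Finset.univ.filter (fun l : Fin m => l < i)).card = (i : ℕ) := by
  have h : Finset.univ.filter (fun l : Fin m => l < i) = Finset.Iio i := by
    ext l; simp
  rw [h, Fin.card_Iio]

omit [Fintype V] in
lemma pos_eq {m : ℕ} (A : Fin m → Finset V) (hA : IsPartition A) (hord : OrderAdapted A)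
    (τ : Finset V) (v : V) :
    (τ.filter (· < v)).card
      = (∑ l ∈ Finset.univ.filter (· < pIdx A hA v), (τ ∩ A l).card)
        + ((τ ∩ A (pIdx A hA v)).filter (· < v)).card := by
  set i := pIdx A hA v with hi
  rw [Finset.card_eq_sum_card_fiberwise (f := pIdx A hA) (t := Finset.univ)
    (fun w _ => mem_univ _)]
  have key : ∀ l : Fin m, ((τ.filter (· < v)).filter (fun w => pIdx A hA w = l))
      = (τ ∩ A l).filter (· < v) := by
    intro l
    rw [Finset.filter_comm, filter_pIdx]
  rw [← Finset.sum_filter_add_sum_filter_not Finset.univ (fun l => l < i)]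
  congr 1
  · refine Finset.sum_congr rfl fun l hl => ?_
    rw [key l]
    congr 1
    apply Finset.filter_true_of_mem
    intro w hw
    exact hord l i (by simpa using hl) w (mem_inter.1 hw).2 v (mem_pIdx A hA v)
  · rw [Finset.sum_eq_single_of_mem i (by simp)]
    · rw [key i]
    · intro l hl hne
      rw [key l, Finset.card_eq_zero, Finset.filter_eq_empty_iff]
      intro w hw
      have hil : i < l := lt_of_le_of_ne (by simpa using (mem_filter.1 hl).2) (Ne.symm hne)
      exact not_lt.2 (le_of_lt (hord i l hil v (mem_pIdx A hA v) w (mem_inter.1 hw).2))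

omit [DecidableEq V] [Fintype V] [LinearOrder V] in
lemma sum_eq_card_forall_one {α : Type*} [DecidableEq α] (s : Finset α) (f : α → ℕ)
    (h1 : ∀ x ∈ s, 1 ≤ f x) (hs : ∑ x ∈ s, f x = s.card) : ∀ x ∈ s, f x = 1 := by
  intro x hx
  by_contra hne
  have h2 : 2 ≤ f x := by have := h1 x hx; omega
  have h3 := Finset.sum_erase_add s f hx
  have hb : (s.erase x).card ≤ ∑ y ∈ s.erase x, f y := by
    simpa using Finset.card_nsmul_le_sum (s.erase x) f 1
      (fun y hy => h1 y (Finset.mem_of_mem_erase hy))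
  have hc : (s.erase x).card = s.card - 1 := Finset.card_erase_of_mem hx
  have hpos : 1 ≤ s.card := Finset.card_pos.2 ⟨x, hx⟩
  omega

lemma assoc_val {k : ℕ} (A : Fin (k+1) → Finset V) (σ : Finset V) (i : Fin (k+1))
    (h : (Finset.univ.filter fun l => σ ∩ A l = ∅) = {i}) :
    assocCochain A σ = (-1:ℝ)^(i:ℕ) * ((A i).card : ℝ) := by
  rw [assocCochain, h]
  simp

lemma assoc_zero {k : ℕ} (A : Fin (k+1) → Finset V) (σ : Finset V) {i j : Fin (k+1)}
    (hij : i ≠ j) (hi : σ ∩ A i = ∅) (hj : σ ∩ A j = ∅) : assocCochain A σ = 0 := by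
  have h1 : 1 < (Finset.univ.filter fun l => σ ∩ A l = ∅).card :=
    Finset.one_lt_card.2 ⟨i, by simp [hi], j, by simp [hj], hij⟩
  rw [assocCochain, if_neg (by omega)]

lemma delta_eq_sum_erase (X : Finset (Finset V)) (k : ℕ) (hX : IsComplex X)
    (f : Finset V → ℝ) (τ : Finset V) (hτX : τ ∈ X) (hτcard : τ.card = k + 1) :
    delta X k f τ = ∑ v ∈ τ, (-1:ℝ)^((τ.filter (· < v)).card) * f (τ.erase v) := by
  have himg : τ.image (τ.erase ·) ⊆ faces X k := by
    intro σ hσ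
    obtain ⟨v, hv, rfl⟩ := Finset.mem_image.1 hσ
    simp only [faces, mem_filter]
    refine ⟨hX τ hτX _ (erase_subset _ _), ?_⟩
    rw [Finset.card_erase_of_mem hv, hτcard]; omega
  have hsum := Finset.sum_subset himg (f := fun σ => incidence τ σ * f σ) ?_
  · rw [delta, ← hsum, Finset.sum_image ?_]
    · refine Finset.sum_congr rfl fun v hv => ?_
      congr 1
      rw [incidence.eq_def, if_pos ⟨erase_subset _ _,
        by rw [Finset.card_erase_of_mem hv, hτcard]; omega⟩,
        Finset.sdiff_erase_self hv, Finset.sum_singleton]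
    · intro v hv w hw h
      by_contra hne
      exact (Finset.notMem_erase v τ) ((show τ.erase v = τ.erase w from h) ▸ Finset.mem_erase.2 ⟨hne, hv⟩)
  · intro σ hσf hσn
    have hnsub : ¬ σ ⊆ τ := by
      intro hsub
      have hc : σ.card = k := (mem_filter.1 hσf).2
      have h1 : (τ \ σ).card = 1 := by
        rw [Finset.card_sdiff_of_subset hsub, hτcard, hc]; omega
      obtain ⟨v, hv⟩ := Finset.card_eq_one.1 h1
      apply hσn
      refine Finset.mem_image.2 ⟨v, ?_, ?_⟩
      · have : v ∈ τ \ σ := hv ▸ Finset.mem_singleton_self v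
        exact (Finset.mem_sdiff.1 this).1
      · rw [Finset.erase_eq, ← hv, Finset.sdiff_sdiff_eq_self hsub]
    rw [incidence.eq_def, if_neg (fun h => hnsub h.1), zero_mul]


/-- Pointwise form of Lemma 1.6: for every `k`-face `τ` of `X`, the coboundary of the
associated cochain satisfies `(δ_{k-1} f)(τ) = |V|` if `τ ∈ F(A_0,…,A_k)` and `= 0`
otherwise. -/
theorem delta_assocCochain_eq
    {V : Type*} [DecidableEq V] [Fintype V] [LinearOrder V]
    (X : Finset (Finset V)) (k : ℕ)
    (hX : IsComplex X) (hdim : IsDim X k)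
    (A : Fin (k + 1) → Finset V) (hA : IsPartition A) (hord : OrderAdapted A) :
    ∀ τ ∈ faces X (k + 1),
      delta X k (assocCochain A) τ
        = if τ ∈ Fset X k A then (Fintype.card V : ℝ) else 0 := by
  intro τ hτ
  have hτX : τ ∈ X := (mem_filter.1 hτ).1
  have hτcard : τ.card = k + 1 := (mem_filter.1 hτ).2
  have hsum0 := delta_eq_sum_erase X k hX (assocCochain A) τ hτX hτcard
  have hcardsum : ∑ l, (τ ∩ A l).card = k + 1 := by
    rw [sum_card_inter A hA, hτcard]
  have hFset : τ ∈ Fset X k A ↔ ∀ i, (τ ∩ A i).card = 1 := by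
    simp [Fset, hτ]
  by_cases hall : ∀ i, (τ ∩ A i).card = 1
  · -- τ ∈ Fset : value |V|
    rw [if_pos (hFset.2 hall), hsum0]
    have hterm : ∀ v ∈ τ, (-1:ℝ)^((τ.filter (· < v)).card) * assocCochain A (τ.erase v)
        = ((A (pIdx A hA v)).card : ℝ) := by
      intro v hv
      set i := pIdx A hA v with hidef
      have hsingle : τ ∩ A i = {v} := by
        obtain ⟨w, hw⟩ := Finset.card_eq_one.1 (hall i)
        have hvm : v ∈ τ ∩ A i := mem_inter.2 ⟨hv, mem_pIdx A hA v⟩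
        rw [hw] at hvm ⊢
        rw [Finset.mem_singleton.1 hvm]
      have hfil : (Finset.univ.filter fun l => (τ.erase v) ∩ A l = ∅) = {i} := by
        ext l
        simp only [mem_filter, mem_univ, true_and, mem_singleton]
        rw [Finset.erase_inter]
        constructor
        · intro h
          obtain ⟨w, hw⟩ := Finset.card_eq_one.1 (hall l)
          rw [hw] at h
          by_contra hne
          have hwv : w ≠ v := by
            rintro rfl
            have : w ∈ A l := (mem_inter.1 (hw ▸ Finset.mem_singleton_self w)).2
            exact hne (pIdx_eq A hA this).symm
          rw [Finset.erase_eq_of_notMem (by simp [Ne.symm hwv])] at h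
          exact (Finset.singleton_ne_empty w) h
        · rintro rfl
          rw [hsingle, Finset.erase_singleton]
      have hval : assocCochain A (τ.erase v) = (-1:ℝ)^(i:ℕ) * ((A i).card : ℝ) :=
        assoc_val A _ i hfil
      have hpos : (τ.filter (· < v)).card = (i : ℕ) := by
        rw [pos_eq A hA hord τ v, ← hidef]
        have h2 : ((τ ∩ A i).filter (· < v)).card = 0 := by
          rw [hsingle, Finset.filter_singleton, if_neg (lt_irrefl v), Finset.card_empty]
        rw [h2, add_zero, Finset.sum_congr rfl (fun l _ => hall l),
          Finset.sum_const, smul_eq_mul, mul_one, filter_lt_univ_fin]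
      rw [hval, hpos, ← mul_assoc, ← pow_add, ← two_mul, pow_mul, neg_one_sq, one_pow, one_mul]
    rw [Finset.sum_congr rfl hterm]
    rw [← Finset.sum_fiberwise_of_maps_to (g := pIdx A hA) (t := Finset.univ)
      (fun v _ => mem_univ _)]
    have hinner : ∀ l : Fin (k+1), ∑ v ∈ τ.filter (fun v => pIdx A hA v = l),
        ((A (pIdx A hA v)).card : ℝ) = ((A l).card : ℝ) := by
      intro l
      rw [Finset.sum_congr rfl (fun v hv => by rw [(mem_filter.1 hv).2]),
        Finset.sum_const, filter_pIdx, hall l, one_smul]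
    rw [Finset.sum_congr rfl (fun l _ => hinner l)]
    rw [← Nat.cast_sum]
    congr 1
    have := sum_card_inter A hA (Finset.univ : Finset V)
    simp only [Finset.univ_inter] at this
    rw [this, Finset.card_univ]
  · -- τ ∉ Fset : value 0
    rw [if_neg (fun h => hall (hFset.1 h)), hsum0]
    by_cases hE2 : ∃ l₁ l₂ : Fin (k+1), l₁ ≠ l₂ ∧ τ ∩ A l₁ = ∅ ∧ τ ∩ A l₂ = ∅
    · obtain ⟨l₁, l₂, hne, h1, h2⟩ := hE2
      refine Finset.sum_eq_zero fun v hv => ?_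
      rw [assoc_zero A _ hne (by rw [Finset.erase_inter, h1, Finset.erase_empty])
        (by rw [Finset.erase_inter, h2, Finset.erase_empty]), mul_zero]
    · -- at most one empty part
      push_neg at hE2
      -- there is an empty part
      have hex : ∃ l, τ ∩ A l = ∅ := by
        by_contra hno
        push_neg at hno
        have hone : ∀ l, 1 ≤ (τ ∩ A l).card := fun l =>
          Finset.card_pos.2 (hno l)
        obtain ⟨i₀, hi₀⟩ := not_forall.1 hall
        have h2 : 2 ≤ (τ ∩ A i₀).card := by have := hone i₀; omega
        have h3 := Finset.sum_erase_add Finset.univ (fun l => (τ ∩ A l).card) (mem_univ i₀)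
        beta_reduce at h3
        have hb : (Finset.univ.erase i₀).card ≤ ∑ l ∈ Finset.univ.erase i₀, (τ ∩ A l).card := by
          simpa using Finset.card_nsmul_le_sum (Finset.univ.erase i₀)
            (fun l => (τ ∩ A l).card) 1 (fun l _ => hone l)
        have hcard : (Finset.univ.erase i₀).card = k := by
          rw [Finset.card_erase_of_mem (mem_univ i₀), Finset.card_univ, Fintype.card_fin]; omega
        rw [hcardsum] at h3
        omega
      obtain ⟨l₀, hl₀⟩ := hex
      have hone : ∀ l, l ≠ l₀ → 1 ≤ (τ ∩ A l).card := by
        intro l hl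
        by_contra hc
        have : τ ∩ A l = ∅ := Finset.card_eq_zero.1 (by omega)
        exact (Finset.nonempty_iff_ne_empty.1 (hE2 l l₀ hl this)) hl₀
      have hsE : ∑ l ∈ Finset.univ.erase l₀, (τ ∩ A l).card = k + 1 := by
        have h3 := Finset.sum_erase_add Finset.univ (fun l => (τ ∩ A l).card) (mem_univ l₀)
        beta_reduce at h3
        rw [hcardsum] at h3
        rw [Finset.card_eq_zero.2 hl₀] at h3
        omega
      have hcardE : (Finset.univ.erase l₀).card = k := by
        rw [Finset.card_erase_of_mem (mem_univ l₀), Finset.card_univ, Fintype.card_fin]; omega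
      have hexp : ∃ p ∈ Finset.univ.erase l₀, 2 ≤ (τ ∩ A p).card := by
        by_contra h
        push_neg at h
        have hb : ∑ l ∈ Finset.univ.erase l₀, (τ ∩ A l).card ≤ (Finset.univ.erase l₀).card := by
          simpa using Finset.sum_le_card_nsmul (Finset.univ.erase l₀)
            (fun l => (τ ∩ A l).card) 1 (fun l hl => by show (τ ∩ A l).card ≤ 1; have := h l hl; omega)
        omega
      obtain ⟨p, hpmem, hp2⟩ := hexp
      have hpne : p ≠ l₀ := (Finset.mem_erase.1 hpmem).1
      have hcp : (τ ∩ A p).card = 2 := by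
        have h3 := Finset.sum_erase_add (Finset.univ.erase l₀)
          (fun l => (τ ∩ A l).card) hpmem
        beta_reduce at h3
        have hb : ((Finset.univ.erase l₀).erase p).card
            ≤ ∑ l ∈ (Finset.univ.erase l₀).erase p, (τ ∩ A l).card := by
          simpa using Finset.card_nsmul_le_sum ((Finset.univ.erase l₀).erase p)
            (fun l => (τ ∩ A l).card) 1
            (fun l hl => hone l (Finset.mem_erase.1 (Finset.mem_of_mem_erase hl)).1)
        have hc2 : ((Finset.univ.erase l₀).erase p).card = k - 1 := by
          rw [Finset.card_erase_of_mem hpmem, hcardE]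
        have hk1 : 1 ≤ k := by
          by_contra hk
          have hk0 : k = 0 := by omega
          subst hk0
          have h1 := p.isLt
          have h2 := l₀.isLt
          exact hpne (Fin.ext (by omega))
        omega
      have hrest : ∀ l, l ≠ l₀ → l ≠ p → (τ ∩ A l).card = 1 := by
        intro l hl hlp
        have h3 := Finset.sum_erase_add (Finset.univ.erase l₀)
          (fun l => (τ ∩ A l).card) hpmem
        beta_reduce at h3
        have hc2 : ((Finset.univ.erase l₀).erase p).card = k - 1 := by
          rw [Finset.card_erase_of_mem hpmem, hcardE]
        have hssum : ∑ l ∈ (Finset.univ.erase l₀).erase p, (τ ∩ A l).card = k - 1 := by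
          simp only [hcp] at h3
          have hk1 : 1 ≤ k := by
            by_contra hk
            have hk0 : k = 0 := by omega
            subst hk0
            have h1 := p.isLt
            have h2 := l₀.isLt
            exact hpne (Fin.ext (by omega))
          omega
        exact sum_eq_card_forall_one _ _
          (fun x hx => hone x (Finset.mem_erase.1 (Finset.mem_of_mem_erase hx)).1)
          (by rw [hssum, hc2])
          l (by simp [hl, hlp])
      -- extract the two vertices of the doubled part
      obtain ⟨u₀, u₁, hneu, hpair₀⟩ := Finset.card_eq_two.1 hcp
      -- wlog u < u'
      have key : ∀ u u' : V, u < u' → τ ∩ A p = {u, u'} →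
          ∑ v ∈ τ, (-1:ℝ)^((τ.filter (· < v)).card) * assocCochain A (τ.erase v) = 0 := by
        intro u u' huu' hpair
        have hu : u ∈ τ := (mem_inter.1 (hpair ▸ by simp : u ∈ τ ∩ A p)).1
        have hu' : u' ∈ τ := (mem_inter.1 (hpair ▸ by simp : u' ∈ τ ∩ A p)).1
        have huA : u ∈ A p := (mem_inter.1 (hpair ▸ by simp : u ∈ τ ∩ A p)).2
        have hu'A : u' ∈ A p := (mem_inter.1 (hpair ▸ by simp : u' ∈ τ ∩ A p)).2
        have hneuu : u ≠ u' := ne_of_lt huu'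
        set g : V → ℝ := fun v => (-1:ℝ)^((τ.filter (· < v)).card) * assocCochain A (τ.erase v)
          with hg
        -- the value of assocCochain at erase u / erase u'
        have hfil : ∀ v ∈ ({u, u'} : Finset V),
            (Finset.univ.filter fun l => (τ.erase v) ∩ A l = ∅) = {l₀} := by
          intro v hv
          have hvp : v ∈ A p := by
            rcases Finset.mem_insert.1 hv with rfl | hv'
            · exact huA
            · rw [Finset.mem_singleton.1 hv']; exact hu'A
          ext l
          simp only [mem_filter, mem_univ, true_and, mem_singleton]
          rw [Finset.erase_inter]
          constructor
          · intro h
            by_contra hne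
            by_cases hlp : l = p
            · subst hlp
              rw [hpair] at h
              have hc2 : ({u, u'} : Finset V).card = 2 := Finset.card_pair hneuu
              have hle := Finset.pred_card_le_card_erase
                (s := ({u, u'} : Finset V)) (a := v)
              rw [h, hc2] at hle
              simp at hle
            · obtain ⟨w, hw⟩ := Finset.card_eq_one.1 (hrest l hne hlp)
              rw [hw] at h
              have hwv : w ≠ v := by
                rintro rfl
                have hvAl : w ∈ A l := (mem_inter.1 (hw ▸ Finset.mem_singleton_self w)).2
                exact hlp ((pIdx_eq A hA hvAl).symm.trans (pIdx_eq A hA hvp))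
              rw [Finset.erase_eq_of_notMem (by simp [Ne.symm hwv])] at h
              exact Finset.singleton_ne_empty w h
          · rintro rfl
            rw [hl₀, Finset.erase_empty]
        have hvalu : assocCochain A (τ.erase u) = (-1:ℝ)^(l₀:ℕ) * ((A l₀).card : ℝ) :=
          assoc_val A _ l₀ (hfil u (by simp))
        have hvalu' : assocCochain A (τ.erase u') = (-1:ℝ)^(l₀:ℕ) * ((A l₀).card : ℝ) :=
          assoc_val A _ l₀ (hfil u' (by simp))
        have hpu : pIdx A hA u = p := pIdx_eq A hA huA
        have hpu' : pIdx A hA u' = p := pIdx_eq A hA hu'A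
        have hposu : (τ.filter (· < u)).card
            = ∑ l ∈ Finset.univ.filter (· < p), (τ ∩ A l).card := by
          rw [pos_eq A hA hord τ u, hpu, hpair]
          have hf : ({u, u'} : Finset V).filter (· < u) = ∅ := by
            rw [Finset.filter_eq_empty_iff]
            intro w hw
            rcases Finset.mem_insert.1 hw with rfl | hw'
            · exact lt_irrefl _
            · rw [Finset.mem_singleton.1 hw']; exact not_lt.2 (le_of_lt huu')
          rw [hf, Finset.card_empty, add_zero]
        have hposu' : (τ.filter (· < u')).card
            = (∑ l ∈ Finset.univ.filter (· < p), (τ ∩ A l).card) + 1 := by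
          rw [pos_eq A hA hord τ u', hpu', hpair]
          have hf : ({u, u'} : Finset V).filter (· < u') = {u} := by
            ext w
            simp only [Finset.mem_filter, Finset.mem_insert, Finset.mem_singleton]
            constructor
            · rintro ⟨rfl | rfl, hlt⟩
              · rfl
              · exact absurd hlt (lt_irrefl _)
            · rintro rfl; exact ⟨Or.inl rfl, huu'⟩
          rw [hf, Finset.card_singleton]
        have hzero : ∀ v ∈ (τ.erase u).erase u', g v = 0 := by
          intro v hv
          have hv1 : v ≠ u' := (Finset.mem_erase.1 hv).1
          have hv2 : v ≠ u := (Finset.mem_erase.1 (Finset.mem_of_mem_erase hv)).1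
          have hvτ : v ∈ τ := Finset.mem_of_mem_erase (Finset.mem_of_mem_erase hv)
          set i := pIdx A hA v with hidef
          have hiτ : v ∈ τ ∩ A i := mem_inter.2 ⟨hvτ, mem_pIdx A hA v⟩
          have hip : i ≠ p := by
            rintro h
            rw [h, hpair] at hiτ
            rcases Finset.mem_insert.1 hiτ with h' | h'
            · exact hv2 h'
            · exact hv1 (Finset.mem_singleton.1 h')
          have hil : i ≠ l₀ := by
            rintro h
            rw [h, hl₀] at hiτ
            exact absurd hiτ (Finset.notMem_empty v)
          have hsingle : τ ∩ A i = {v} := by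
            obtain ⟨w, hw⟩ := Finset.card_eq_one.1 (hrest i hil hip)
            rw [hw] at hiτ ⊢
            rw [Finset.mem_singleton.1 hiτ]
          have hz : assocCochain A (τ.erase v) = 0 :=
            assoc_zero A _ hil
              (by rw [Finset.erase_inter, hsingle, Finset.erase_singleton])
              (by rw [Finset.erase_inter, hl₀, Finset.erase_empty])
          rw [hg]
          simp only
          rw [hz, mul_zero]
        rw [← Finset.sum_erase_add τ g hu,
          ← Finset.sum_erase_add (τ.erase u) g (Finset.mem_erase.2 ⟨Ne.symm hneuu, hu'⟩),
          Finset.sum_eq_zero hzero, zero_add, hg]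
        simp only
        rw [hposu, hposu', hvalu, hvalu', pow_succ]
        ring
      rcases lt_or_gt_of_ne hneu with h | h
      · exact key u₀ u₁ h hpair₀
      · exact key u₁ u₀ h (by rw [hpair₀, Finset.pair_comm])


end HigherCheeger
end
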